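/- Let F ∈ R[x₁,…,xₙ] be a quasiconvex polynomial of total degree at most d, let a ∈ R^n, and let {b₁,…,bₙ} be a basis of R^n. If for every i = 1,…,n there exist d pairwise distinct real numbers λ_{i1},…,λ_{id} such that ∇F(a + λ_{ij} bᵢ) = 0 for all j = 1,…,d, then F is a constant polynomial. -/

import Mathlib

open MvPolynomial

noncomputable def lineComp {n : ℕ} (a v : Fin n → ℝ) (F : MvPolynomial (Fin n) ℝ) :
    Polynomial ℝ :=
  MvPolynomial.aeval (fun k => Polynomial.C (a k) + Polynomial.C (v k) * Polynomial.X) F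

lemma eval_lineComp {n : ℕ} (a v : Fin n → ℝ) (F : MvPolynomial (Fin n) ℝ) (t : ℝ) :
    (lineComp a v F).eval t = MvPolynomial.eval (a + t • v) F := by
  have h : (lineComp a v F).eval t = MvPolynomial.eval (fun k => a k + t * v k) F := by
    unfold lineComp
    induction F using MvPolynomial.induction_on with
    | C c => simp
    | add p q hp hq => simp [hp, hq]
    | mul_X p i hp =>
      simp only [map_mul, Polynomial.eval_mul, hp, MvPolynomial.aeval_X, MvPolynomial.eval_mul,
        MvPolynomial.eval_X, Polynomial.eval_add, Polynomial.eval_C, Polynomial.eval_mul,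
        Polynomial.eval_X]
      ring
  have h2 : (a + t • v) = fun k => a k + t * v k := by
    funext k; simp [mul_comm]
  rw [h, h2]

lemma natDegree_lineComp_le {n : ℕ} (a v : Fin n → ℝ) (F : MvPolynomial (Fin n) ℝ) :
    (lineComp a v F).natDegree ≤ F.totalDegree := by
  unfold lineComp
  rw [MvPolynomial.aeval_def, MvPolynomial.eval₂_eq]
  apply Polynomial.natDegree_sum_le_of_forall_le
  intro m hm
  refine Polynomial.natDegree_mul_le.trans ?_
  have h1 : (algebraMap ℝ (Polynomial ℝ) (MvPolynomial.coeff m F)).natDegree = 0 := by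
    simp [Polynomial.natDegree_C]
  rw [h1, zero_add]
  refine (Polynomial.natDegree_prod_le _ _).trans ?_
  have h2 : ∀ i ∈ m.support,
      ((Polynomial.C (a i) + Polynomial.C (v i) * Polynomial.X) ^ m i).natDegree ≤ m i := by
    intro i _
    refine Polynomial.natDegree_pow_le.trans ?_
    have h3 : (Polynomial.C (a i) + Polynomial.C (v i) * Polynomial.X).natDegree ≤ 1 := by
      refine (Polynomial.natDegree_add_le _ _).trans ?_
      simp only [Polynomial.natDegree_C, max_le_iff]
      exact ⟨Nat.zero_le _, (Polynomial.natDegree_C_mul_le _ _).trans Polynomial.natDegree_X_le⟩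
    calc m i * (Polynomial.C (a i) + Polynomial.C (v i) * Polynomial.X).natDegree
        ≤ m i * 1 := Nat.mul_le_mul_left _ h3
      _ = m i := mul_one _
  have h5 : ∑ i ∈ m.support,
      ((Polynomial.C (a i) + Polynomial.C (v i) * Polynomial.X) ^ m i).natDegree
      ≤ ∑ i ∈ m.support, m i := Finset.sum_le_sum h2
  refine h5.trans ?_
  have h4 := MvPolynomial.le_totalDegree hm
  simpa [Finsupp.sum] using h4

lemma derivative_lineComp {n : ℕ} (a v : Fin n → ℝ) (F : MvPolynomial (Fin n) ℝ) :
    Polynomial.derivative (lineComp a v F) =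
      ∑ k : Fin n, Polynomial.C (v k) * lineComp a v (MvPolynomial.pderiv k F) := by
  unfold lineComp
  induction F using MvPolynomial.induction_on with
  | C c => simp
  | add p q hp hq => simp [hp, hq, Finset.sum_add_distrib, mul_add]
  | mul_X p i hp =>
    classical
    rw [map_mul, Polynomial.derivative_mul, hp]
    have hder : Polynomial.derivative
        ((MvPolynomial.aeval fun k => Polynomial.C (a k) + Polynomial.C (v k) * Polynomial.X)
          (MvPolynomial.X i : MvPolynomial (Fin n) ℝ)) = Polynomial.C (v i) := by
      simp only [MvPolynomial.aeval_X]
      simp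
    rw [hder]
    have hterm : ∀ k : Fin n,
        Polynomial.C (v k) *
          (MvPolynomial.aeval fun k => Polynomial.C (a k) + Polynomial.C (v k) * Polynomial.X)
            (MvPolynomial.pderiv k (p * MvPolynomial.X i)) =
        Polynomial.C (v k) *
            ((MvPolynomial.aeval fun k => Polynomial.C (a k) + Polynomial.C (v k) * Polynomial.X)
              (MvPolynomial.pderiv k p)) *
            ((MvPolynomial.aeval fun k => Polynomial.C (a k) + Polynomial.C (v k) * Polynomial.X)
              (MvPolynomial.X i : MvPolynomial (Fin n) ℝ)) +
          (if i = k then Polynomial.C (v k) *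
            ((MvPolynomial.aeval fun k => Polynomial.C (a k) + Polynomial.C (v k) * Polynomial.X)
              p) else 0) := by
      intro k
      rw [MvPolynomial.pderiv_mul, MvPolynomial.pderiv_X, Pi.single_apply]
      split_ifs with h
      · simp only [if_pos h, map_add, map_mul, map_one, mul_one]
        ring
      · simp only [if_neg h, map_add, map_mul, map_zero, mul_zero, add_zero]
        ring
    rw [Finset.sum_congr rfl fun k _ => hterm k, Finset.sum_add_distrib, Finset.sum_ite_eq,
      if_pos (Finset.mem_univ i), ← Finset.sum_mul]
    ring

lemma uni_const (g : Polynomial ℝ) (hb : ∀ t : ℝ, g.eval t ≤ g.eval 0)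
    (hc : ∀ α : ℝ, Convex ℝ {t : ℝ | g.eval t ≤ α}) (t : ℝ) : g.eval t = g.eval 0 := by
  by_cases hdeg : g.degree ≤ 0
  · conv_lhs => rw [Polynomial.eq_C_of_degree_le_zero hdeg]
    conv_rhs => rw [Polynomial.eq_C_of_degree_le_zero hdeg]
    simp
  · exfalso
    push_neg at hdeg
    set M := g.eval 0 with hM
    set α := M - 1 with hα
    set b := |α| + |M| + 1 with hb'
    have hev : ∀ s : ℝ, b ≤ |g.eval s| → g.eval s ≤ α := by
      intro s hs
      by_contra h
      push_neg at h
      have h1 : g.eval s ≤ M := hb s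
      have l2 : M ≤ |M| := le_abs_self M
      have l3 : -|α| ≤ α := neg_abs_le α
      have l4 : (0:ℝ) ≤ |M| := abs_nonneg M
      have l5 : (0:ℝ) ≤ |α| := abs_nonneg α
      have habs : |g.eval s| ≤ |α| + |M| := abs_le.mpr ⟨by linarith, by linarith⟩
      rw [hb'] at hs
      linarith
    obtain ⟨s₁, hs₁0, hs₁⟩ : ∃ s : ℝ, 0 ≤ s ∧ g.eval s ≤ α := by
      have h2 := (Polynomial.abs_tendsto_atTop g hdeg).eventually_ge_atTop b
      obtain ⟨s, hs⟩ := (h2.and (Filter.eventually_ge_atTop (0:ℝ))).exists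
      exact ⟨s, hs.2, hev s hs.1⟩
    obtain ⟨s₂, hs₂0, hs₂⟩ : ∃ s : ℝ, 0 ≤ s ∧ g.eval (-s) ≤ α := by
      set q := g.comp (-Polynomial.X : Polynomial ℝ) with hq'
      have hdq : 0 < q.degree := by
        rw [← Polynomial.natDegree_pos_iff_degree_pos] at hdeg ⊢
        rw [hq', Polynomial.natDegree_comp]
        simpa using hdeg
      have h2 := (Polynomial.abs_tendsto_atTop q hdq).eventually_ge_atTop b
      obtain ⟨s, hs⟩ := (h2.and (Filter.eventually_ge_atTop (0:ℝ))).exists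
      have heq : q.eval s = g.eval (-s) := by
        rw [hq', Polynomial.eval_comp]
        simp
      refine ⟨s, hs.2, ?_⟩
      apply hev
      rw [← heq]
      exact hs.1
    have h0 : (0:ℝ) ∈ segment ℝ (-s₂) s₁ := by
      rw [segment_eq_Icc (by linarith : -s₂ ≤ s₁)]
      exact ⟨by linarith, by linarith⟩
    have hmem := (hc α).segment_subset hs₂ hs₁ h0
    simp only [Set.mem_setOf_eq] at hmem
    rw [hα] at hmem
    linarith

theorem stmt4 {n d : ℕ} (F : MvPolynomial (Fin n) ℝ) (hd : F.totalDegree ≤ d)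
    (hq : ∀ α : ℝ, Convex ℝ {x : Fin n → ℝ | eval x F ≤ α})
    (a : Fin n → ℝ) (B : Module.Basis (Fin n) ℝ (Fin n → ℝ))
    (Λ : Fin n → Fin d → ℝ) (hΛ : ∀ i, Function.Injective (Λ i))
    (hgrad : ∀ (i : Fin n) (j : Fin d) (k : Fin n),
      eval (a + Λ i j • B i) (pderiv k F) = 0) :
    ∃ c : ℝ, F = C c := by
  classical
  have key1 : ∀ (i : Fin n) (t : ℝ), eval (a + t • B i) F = eval a F := by
    intro i
    have hder : Polynomial.derivative (lineComp a (B i) F) = 0 := by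
      rcases Nat.eq_zero_or_pos d with hd0 | hd0
      · have hdeg0 : (lineComp a (B i) F).natDegree = 0 :=
          Nat.le_antisymm ((natDegree_lineComp_le a (B i) F).trans (hd.trans hd0.le)) (Nat.zero_le _)
        rw [Polynomial.eq_C_of_natDegree_eq_zero hdeg0]
        simp
      · apply Polynomial.eq_zero_of_natDegree_lt_card_of_eval_eq_zero _ (hΛ i)
        · intro j
          rw [derivative_lineComp, Polynomial.eval_finset_sum]
          refine Finset.sum_eq_zero fun k _ => ?_
          rw [Polynomial.eval_mul, eval_lineComp, hgrad i j k, mul_zero]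
        · rw [Fintype.card_fin]
          calc (Polynomial.derivative (lineComp a (B i) F)).natDegree
              ≤ (lineComp a (B i) F).natDegree - 1 := Polynomial.natDegree_derivative_le _
            _ ≤ d - 1 := Nat.sub_le_sub_right ((natDegree_lineComp_le _ _ _).trans hd) 1
            _ < d := Nat.sub_lt hd0 one_pos
    have hgC := Polynomial.eq_C_of_derivative_eq_zero hder
    intro t
    have h1 := eval_lineComp a (B i) F t
    have h2 := eval_lineComp a (B i) F 0
    rw [hgC, Polynomial.eval_C] at h1 h2
    rw [← h1, h2]
    simp
  have key2 : ∀ x : Fin n → ℝ, eval x F ≤ eval a F := by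
    intro x
    rcases Nat.eq_zero_or_pos n with hn | hn
    · subst hn
      have hxa : x = a := funext fun k => k.elim0
      rw [hxa]
    · have hn' : (n:ℝ) ≠ 0 := Nat.cast_ne_zero.mpr hn.ne'
      have hsum : ∑ i : Fin n,
          ((n:ℝ)⁻¹) • (a + ((n : ℝ) * B.repr (x - a) i) • B i) = x := by
        have hterm : ∀ i : Fin n, ((n:ℝ)⁻¹) • (a + ((n : ℝ) * B.repr (x - a) i) • B i)
            = (n:ℝ)⁻¹ • a + B.repr (x - a) i • B i := by
          intro i
          rw [smul_add, smul_smul, inv_mul_cancel_left₀ hn']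
        rw [Finset.sum_congr rfl fun i _ => hterm i, Finset.sum_add_distrib, Finset.sum_const,
          Finset.card_univ, Fintype.card_fin, B.sum_repr (x - a),
          ← Nat.cast_smul_eq_nsmul ℝ, smul_smul, mul_inv_cancel₀ hn', one_smul]
        abel
      have hconv := (hq (eval a F)).sum_mem (t := Finset.univ)
        (fun i _ => inv_nonneg.mpr (Nat.cast_nonneg n))
        (by
          rw [Finset.sum_const, Finset.card_univ, Fintype.card_fin, nsmul_eq_mul,
            mul_inv_cancel₀ hn'])
        (fun i _ => le_of_eq (key1 i ((n : ℝ) * B.repr (x - a) i)))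
      rw [hsum] at hconv
      exact hconv
  have key3 : ∀ x : Fin n → ℝ, eval x F = eval a F := by
    intro x
    have hb : ∀ t : ℝ, (lineComp a (x - a) F).eval t ≤ (lineComp a (x - a) F).eval 0 := by
      intro t
      rw [eval_lineComp, eval_lineComp]
      simp only [zero_smul, add_zero]
      exact key2 _
    have hcg : ∀ α : ℝ, Convex ℝ {t : ℝ | (lineComp a (x - a) F).eval t ≤ α} := by
      intro α
      have heq : {t : ℝ | (lineComp a (x - a) F).eval t ≤ α}
          = (AffineMap.lineMap a x : ℝ →ᵃ[ℝ] (Fin n → ℝ)) ⁻¹' {y : Fin n → ℝ | eval y F ≤ α} := by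
        ext s
        simp only [Set.mem_setOf_eq, Set.mem_preimage, AffineMap.lineMap_apply, eval_lineComp,
          vsub_eq_sub, vadd_eq_add]
        rw [add_comm]
      rw [heq]
      exact (hq α).affine_preimage _
    have huni := uni_const _ hb hcg 1
    rw [eval_lineComp, eval_lineComp] at huni
    simpa using huni
  refine ⟨eval a F, MvPolynomial.funext fun x => ?_⟩
  rw [key3 x, eval_C]
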